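/- For all integers j ≥ 0, i ≥ 0, and a ≥ 1, the sum ∑_{l=0}^{j} (-1)^l * C(j, l) / ((l + a) * C(l + a + i, i)) equals 1 / (a * C(i + j + a, a)). -/

import Mathlib

lemma key_step (n a : ℕ) (ha : 1 ≤ a) :
    (1 : ℚ) / (a * ((n + a).choose a)) - 1 / ((a + 1) * ((n + a + 1).choose (a + 1))) =
      1 / (a * ((n + a + 1).choose a)) := by
  have hn1 : (a + 1) * ((n + a + 1).choose (a + 1)) = (n + a + 1) * ((n + a).choose a) := by
    have := Nat.add_one_mul_choose_eq (n + a) a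
    rw [mul_comm]
    exact this.symm
  have hn2 : (n + 1) * ((n + a + 1).choose a) = (n + a + 1) * ((n + a).choose a) := by
    have h3 := Nat.add_one_mul_choose_eq (n + a) n
    have h4 : (n + a).choose n = (n + a).choose a := Nat.choose_symm_add
    have h5 : (n + a + 1).choose (n + 1) = (n + a + 1).choose a := by
      have he : n + a + 1 = (n + 1) + a := by ring
      rw [he, Nat.choose_symm_add]
    simp only [Nat.succ_eq_add_one, h4, h5] at h3
    rw [mul_comm]
    exact h3.symm
  have h1 : ((a : ℚ) + 1) * ((n + a + 1).choose (a + 1)) =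
      ((n : ℚ) + a + 1) * ((n + a).choose a) := by exact_mod_cast hn1
  have h2 : ((n : ℚ) + 1) * ((n + a + 1).choose a) =
      ((n : ℚ) + a + 1) * ((n + a).choose a) := by exact_mod_cast hn2
  have ca : (0 : ℚ) < a := by exact_mod_cast ha
  have c1 : (0 : ℚ) < ((n + a).choose a : ℚ) := by
    exact_mod_cast Nat.choose_pos (by omega)
  have c2 : (0 : ℚ) < ((n + a + 1).choose (a + 1) : ℚ) := by
    exact_mod_cast Nat.choose_pos (by omega)
  have c3 : (0 : ℚ) < ((n + a + 1).choose a : ℚ) := by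
    exact_mod_cast Nat.choose_pos (by omega)
  field_simp
  linear_combination (((n + a + 1).choose a : ℚ) - ((n + a).choose a : ℚ)) * h1 +
    ((n + a).choose a : ℚ) * h2

theorem stmt2 (j i a : ℕ) (ha : 1 ≤ a) :
    ∑ l ∈ Finset.range (j + 1),
      (-1 : ℚ) ^ l * (j.choose l) / ((l + a) * ((l + a + i).choose i)) =
      1 / (a * ((i + j + a).choose a)) := by
  induction j generalizing a with
  | zero =>
    simp only [Finset.sum_range_one, pow_zero, Nat.choose_self, Nat.cast_one, one_mul,
      Nat.cast_zero, zero_add]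
    have h : i + 0 + a = a + i := by omega
    rw [h]
    have h2 : (a + i).choose i = (a + i).choose a := (Nat.choose_symm_add).symm
    rw [h2]
  | succ j ih =>
    have step : ∑ l ∈ Finset.range (j + 1 + 1),
        (-1 : ℚ) ^ l * ((j+1).choose l) / ((l + a) * ((l + a + i).choose i)) =
        (∑ l ∈ Finset.range (j + 1),
          (-1 : ℚ) ^ l * (j.choose l) / ((l + a) * ((l + a + i).choose i))) -
        (∑ l ∈ Finset.range (j + 1),
          (-1 : ℚ) ^ l * (j.choose l) / ((l + (a+1 : ℕ)) * ((l + (a+1) + i).choose i))) := by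
      rw [Finset.sum_range_succ' (fun l => (-1 : ℚ) ^ l * ((j+1).choose l) / ((l + a) * ((l + a + i).choose i))) (j+1)]
      have hcongr : ∀ l ∈ Finset.range (j + 1),
          (-1 : ℚ) ^ (l+1) * (((j+1).choose (l+1) : ℕ) : ℚ) / ((((l+1 : ℕ) : ℚ) + (a : ℚ)) * (((l+1+a+i).choose i : ℕ) : ℚ)) =
          (-1 : ℚ) ^ (l+1) * ((j.choose (l+1) : ℕ) : ℚ) / ((((l+1 : ℕ) : ℚ) + (a : ℚ)) * (((l+1+a+i).choose i : ℕ) : ℚ))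
          - (-1 : ℚ) ^ l * ((j.choose l : ℕ) : ℚ) / (((l : ℚ) + ((a+1 : ℕ) : ℚ)) * (((l + (a+1) + i).choose i : ℕ) : ℚ)) := by
        intro l _
        have hp : (((j+1).choose (l+1) : ℕ) : ℚ) = ((j.choose l : ℕ) : ℚ) + ((j.choose (l+1) : ℕ) : ℚ) := by
          exact_mod_cast Nat.choose_succ_succ j l
        have he : l + (a+1) + i = l + 1 + a + i := by omega
        have hA : ((l : ℚ) + ((a+1 : ℕ) : ℚ)) = (((l+1 : ℕ) : ℚ) + (a : ℚ)) := by push_cast; ring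
        rw [hp, he, hA]
        ring
      rw [Finset.sum_congr rfl hcongr, Finset.sum_sub_distrib]
      have hU := Finset.sum_range_succ' (fun l => (-1 : ℚ) ^ l * ((j.choose l : ℕ) : ℚ) / (((l : ℚ) + (a : ℚ)) * (((l + a + i).choose i : ℕ) : ℚ))) (j+1)
      have hU2 := Finset.sum_range_succ (fun l => (-1 : ℚ) ^ l * ((j.choose l : ℕ) : ℚ) / (((l : ℚ) + (a : ℚ)) * (((l + a + i).choose i : ℕ) : ℚ))) (j+1)
      have hz : ((j.choose (j+1) : ℕ) : ℚ) = 0 := by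
        norm_cast
        exact Nat.choose_eq_zero_of_lt (by omega)
      rw [hz] at hU2
      simp only [zero_mul, mul_zero, zero_div, add_zero] at hU2
      rw [← hU2, hU]
      simp only [Nat.choose_zero_right]
      push_cast
      ring
    rw [step, ih a ha, ih (a+1) (by omega)]
    have hk := key_step (i + j) a ha
    have e2 : i + (j+1) + a = i + j + a + 1 := by ring
    have e3 : i + j + (a + 1) = i + j + a + 1 := by ring
    rw [e2, e3] at *
    push_cast at hk ⊢
    linarith [hk]
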